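/- Suppose B is an observation barrier function (OBF) with level q > 0 and B' is an observation-safety barrier function (OSBF) with level p, both for the same unsafe set U, observation times t_1 < ⋯ < t_k, and observation sets O_1, …, O_k. Let A denote the event {X_{t_i} ∈ O_i for all 1 ≤ i ≤ k, and X_n ∉ U for all n ≤ t_k}. Then the conditional probability of remaining safe forever satisfies ℙ(X_n ∉ U for all n ∈ ℕ | A) ≥ 1 − p/q. -/

import Mathlib

open MeasureTheory

/-- If `B` is an OBF with level `q > 0` and `B'` is an OSBF with level `p` (for the
same unsafe set, observation times and observation sets), and `A` is the event
`{X_{t_i} ∈ O_i for all i and X_n ∉ U for all n ≤ t_k}`, then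
`ℙ(X_n ∉ U for all n | A) ≥ 1 − p/q`. -/
theorem conditional_safety_guarantee
    {Ω : Type*} {m0 : MeasurableSpace Ω} (ℙ : Measure Ω) [IsProbabilityMeasure ℙ]
    (𝓕 : Filtration ℕ m0)
    {𝒳 : Type*} [MeasurableSpace 𝒳]
    (X : ℕ → Ω → 𝒳) (hX_adapted : ∀ n, Measurable[𝓕 n] (X n))
    (x₀ : 𝒳) (hX0 : ∀ᵐ ω ∂ℙ, X 0 ω = x₀)
    (U : Set 𝒳) (hU : MeasurableSet U)
    (k : ℕ) (t : Fin (k + 1) → ℕ) (ht : StrictMono t)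
    (O : Fin (k + 1) → Set 𝒳) (hO : ∀ i, MeasurableSet (O i))
    (B B' : ℕ → 𝒳 → ℝ)
    (hB_meas : ∀ n, Measurable (B n)) (hB'_meas : ∀ n, Measurable (B' n))
    (hB_bdd : ∀ n, ∃ C : ℝ, ∀ x, |B n x| ≤ C)
    (hB'_bdd : ∀ n, ∃ C : ℝ, ∀ x, |B' n x| ≤ C)
    (q p : ℝ) (hq : 0 < q)
    -- `B` is an OBF with level `q`:
    (h_init : q ≤ B 0 x₀)
    (h_drift : ∀ n ≤ t (Fin.last k), ∀ᵐ ω ∂ℙ,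
      (X n ω ∉ U ∧ ∀ i, t i = n → X n ω ∈ O i) →
        B n (X n ω) ≤ (ℙ[fun ω' => B (n + 1) (X (n + 1) ω') | 𝓕 n]) ω)
    (h_nonpos : ∀ n ≤ t (Fin.last k), ∀ x : 𝒳,
      ¬(x ∉ U ∧ ∀ i, t i = n → x ∈ O i) → B n x ≤ 0)
    (h_term : ∀ x : 𝒳, B (t (Fin.last k) + 1) x ≤ 1)
    -- `B'` is an OSBF with level `p`:
    (h'_nonneg : ∀ n, ∀ x : 𝒳, 0 ≤ B' n x)
    (h'_init : B' 0 x₀ ≤ p)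
    (h'_unsafe : ∀ n, ∀ x ∈ U, 1 ≤ B' n x)
    (h'_drift₁ : ∀ n ≤ t (Fin.last k), ∀ᵐ ω ∂ℙ,
      (X n ω ∉ U ∧ ∀ i, t i = n → X n ω ∈ O i) →
        (ℙ[fun ω' => B' (n + 1) (X (n + 1) ω') | 𝓕 n]) ω ≤ B' n (X n ω))
    (h'_drift₂ : ∀ n, t (Fin.last k) < n → ∀ᵐ ω ∂ℙ,
      X n ω ∉ U → (ℙ[fun ω' => B' (n + 1) (X (n + 1) ω') | 𝓕 n]) ω ≤ B' n (X n ω)) :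
    ENNReal.ofReal (1 - p / q) ≤
      ProbabilityTheory.cond ℙ
        {ω | (∀ i, X (t i) ω ∈ O i) ∧ ∀ n ≤ t (Fin.last k), X n ω ∉ U}
        {ω | ∀ n, X n ω ∉ U} := by
  classical
  set T := t (Fin.last k) with hT_def
  set Gs : ℕ → Set 𝒳 := fun n =>
    if n ≤ T then {x | x ∉ U ∧ ∀ i, t i = n → x ∈ O i} else Uᶜ with hGs_def
  have hGs_meas : ∀ n, MeasurableSet (Gs n) := by
    intro n
    rw [hGs_def]
    by_cases hn : n ≤ T
    · simp only [if_pos hn]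
      have he : {x | x ∉ U ∧ ∀ i, t i = n → x ∈ O i}
          = Uᶜ ∩ ⋂ i, {x : 𝒳 | t i = n → x ∈ O i} := by
        ext x; simp [Set.mem_iInter]
      rw [he]
      refine hU.compl.inter (MeasurableSet.iInter fun i => ?_)
      by_cases h : t i = n
      · have : {x : 𝒳 | t i = n → x ∈ O i} = O i := by ext x; simp [h]
        rw [this]; exact hO i
      · have : {x : 𝒳 | t i = n → x ∈ O i} = Set.univ := by ext x; simp [h]
        rw [this]; exact MeasurableSet.univ
    · simp only [if_neg hn]; exact hU.compl
  set D : ℕ → Set Ω := fun n => ⋂ m, ⋂ _ : m < n, X m ⁻¹' Gs m with hD_def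
  have hmemD : ∀ n ω, ω ∈ D n ↔ ∀ m < n, X m ω ∈ Gs m := by
    intro n ω; simp [hD_def, Set.mem_iInter]
  have hmX : ∀ n, Measurable (X n) := fun n => (hX_adapted n).mono (𝓕.le n) le_rfl
  have hDm : ∀ n, MeasurableSet (D n) := fun n =>
    MeasurableSet.iInter fun m => MeasurableSet.iInter fun _ => (hmX m) (hGs_meas m)
  have hD𝓕 : ∀ n, MeasurableSet[𝓕 n] (D (n + 1)) := by
    intro n
    refine MeasurableSet.iInter fun m => MeasurableSet.iInter fun hm => ?_
    exact 𝓕.mono (Nat.lt_succ_iff.mp hm) _ ((hX_adapted m) (hGs_meas m))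
  have hDsub : ∀ n, D (n + 1) ⊆ D n := by
    intro n ω hω
    rw [hmemD] at hω ⊢
    exact fun m hm => hω m (Nat.lt_succ_of_lt hm)
  have hintB : ∀ n, Integrable (fun ω => B n (X n ω)) ℙ := by
    intro n
    obtain ⟨C, hC⟩ := hB_bdd n
    exact Integrable.mono' (integrable_const C)
      (((hB_meas n).comp (hmX n)).aestronglyMeasurable)
      (Filter.Eventually.of_forall fun ω => by simpa using hC (X n ω))
  have hintB' : ∀ n, Integrable (fun ω => B' n (X n ω)) ℙ := by
    intro n
    obtain ⟨C, hC⟩ := hB'_bdd n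
    exact Integrable.mono' (integrable_const C)
      (((hB'_meas n).comp (hmX n)).aestronglyMeasurable)
      (Filter.Eventually.of_forall fun ω => by simpa using hC (X n ω))
  have hD0 : D 0 = Set.univ := by
    ext ω; simp [hmemD]
  have hsplit : ∀ (f : Ω → ℝ), ∀ n, Integrable f ℙ →
      ∫ ω in D n, f ω ∂ℙ
        = (∫ ω in D (n+1), f ω ∂ℙ) + ∫ ω in D n \ D (n+1), f ω ∂ℙ := by
    intro f n hf
    rw [← setIntegral_union disjoint_sdiff_self_right ((hDm n).diff (hDm (n+1)))
      hf.integrableOn hf.integrableOn, Set.union_diff_cancel (hDsub n)]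
  have hguard : ∀ n, n ≤ T → ∀ ω ∈ D (n+1),
      X n ω ∉ U ∧ ∀ i, t i = n → X n ω ∈ O i := by
    intro n hn ω hω
    have h1 := (hmemD (n+1) ω).1 hω n (Nat.lt_succ_self n)
    simpa [hGs_def, if_pos hn] using h1
  -- Claim 1
  have key1 : ∀ n, n ≤ T + 1 → q ≤ ∫ ω in D n, B n (X n ω) ∂ℙ := by
    intro n
    induction n with
    | zero =>
      intro _
      rw [hD0, Measure.restrict_univ]
      have he : ∫ ω, B 0 (X 0 ω) ∂ℙ = B 0 x₀ := by
        rw [integral_congr_ae (g := fun _ => B 0 x₀) (hX0.mono fun ω hω => by rw [hω])]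
        simp
      rw [he]; exact h_init
    | succ n ih =>
      intro hn1
      have hn : n ≤ T := by omega
      have step1 : ∫ ω in D n, B n (X n ω) ∂ℙ ≤ ∫ ω in D (n+1), B n (X n ω) ∂ℙ := by
        rw [hsplit _ n (hintB n)]
        have hnp : ∫ ω in D n \ D (n+1), B n (X n ω) ∂ℙ ≤ 0 := by
          apply setIntegral_nonpos ((hDm n).diff (hDm (n+1)))
          intro ω hω
          refine h_nonpos n hn (X n ω) ?_
          intro hcon
          apply hω.2
          rw [hmemD]
          intro m hm
          rcases Nat.lt_succ_iff_lt_or_eq.mp hm with h | h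
          · exact (hmemD n ω).1 hω.1 m h
          · subst h
            simpa [hGs_def, if_pos hn] using hcon
        linarith
      have step2 : ∫ ω in D (n+1), B n (X n ω) ∂ℙ
          ≤ ∫ ω in D (n+1), (ℙ[fun ω' => B (n+1) (X (n+1) ω') | 𝓕 n]) ω ∂ℙ := by
        refine setIntegral_mono_on_ae (hintB n).integrableOn
          integrable_condExp.integrableOn (hDm (n+1)) ?_
        filter_upwards [h_drift n hn] with ω hω hmem
        exact hω (hguard n hn ω hmem)
      have step3 : ∫ ω in D (n+1), (ℙ[fun ω' => B (n+1) (X (n+1) ω') | 𝓕 n]) ω ∂ℙ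
          = ∫ ω in D (n+1), B (n+1) (X (n+1) ω) ∂ℙ :=
        setIntegral_condExp (𝓕.le n) (hintB (n+1)) (hD𝓕 n)
      have hq' := ih (by omega)
      linarith
  have hA_eq : {ω | (∀ i, X (t i) ω ∈ O i) ∧ ∀ n ≤ T, X n ω ∉ U} = D (T+1) := by
    ext ω
    simp only [Set.mem_setOf_eq, hmemD]
    constructor
    · rintro ⟨hobs, hsafe⟩ m hm
      have hmT : m ≤ T := Nat.lt_succ_iff.mp hm
      simp only [hGs_def, if_pos hmT]
      exact ⟨hsafe m hmT, fun i hi => hi ▸ hobs i⟩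
    · intro h
      constructor
      · intro i
        have hiT : t i ≤ T := ht.monotone (Fin.le_last i)
        have h2 := h (t i) (Nat.lt_succ_of_le hiT)
        simp only [hGs_def, if_pos hiT] at h2
        exact h2.2 i rfl
      · intro n hn
        have h2 := h n (Nat.lt_succ_of_le hn)
        simp only [hGs_def, if_pos hn] at h2
        exact h2.1
  have hqA : ENNReal.ofReal q ≤ ℙ (D (T+1)) := by
    have h1 := key1 (T+1) le_rfl
    have h2 : ∫ ω in D (T+1), B (T+1) (X (T+1) ω) ∂ℙ ≤ (ℙ (D (T+1))).toReal := by
      have h3 := setIntegral_mono_on (hintB (T+1)).integrableOn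
        (integrableOn_const (measure_ne_top ℙ _)) (hDm (T+1))
        (fun ω _ => h_term (X (T+1) ω))
      simpa [setIntegral_const, measureReal_def] using h3
    exact ENNReal.ofReal_le_of_le_toReal (le_trans h1 h2)
  -- Claim 2
  have hguard' : ∀ n ω, X n ω ∈ U → ω ∉ D (n+1) := by
    intro n ω hU' hcon
    have h1 := (hmemD (n+1) ω).1 hcon n (Nat.lt_succ_self n)
    by_cases hn : n ≤ T
    · simp only [hGs_def, if_pos hn] at h1; exact h1.1 hU'
    · simp only [hGs_def, if_neg hn] at h1; exact h1 hU'
  have key2 : ∀ n, (∑ m ∈ Finset.range n, (ℙ (D m ∩ X m ⁻¹' U)).toReal)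
      + ∫ ω in D n, B' n (X n ω) ∂ℙ ≤ p := by
    intro n
    induction n with
    | zero =>
      rw [Finset.sum_range_zero, hD0, Measure.restrict_univ]
      have he : ∫ ω, B' 0 (X 0 ω) ∂ℙ = B' 0 x₀ := by
        rw [integral_congr_ae (g := fun _ => B' 0 x₀) (hX0.mono fun ω hω => by rw [hω])]
        simp
      rw [he]; simpa using h'_init
    | succ n ih =>
      rw [Finset.sum_range_succ]
      have step3 : ∫ ω in D (n+1), B' (n+1) (X (n+1) ω) ∂ℙ
          = ∫ ω in D (n+1), (ℙ[fun ω' => B' (n+1) (X (n+1) ω') | 𝓕 n]) ω ∂ℙ :=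
        (setIntegral_condExp (𝓕.le n) (hintB' (n+1)) (hD𝓕 n)).symm
      have step2 : ∫ ω in D (n+1), (ℙ[fun ω' => B' (n+1) (X (n+1) ω') | 𝓕 n]) ω ∂ℙ
          ≤ ∫ ω in D (n+1), B' n (X n ω) ∂ℙ := by
        refine setIntegral_mono_on_ae integrable_condExp.integrableOn
          (hintB' n).integrableOn (hDm (n+1)) ?_
        by_cases hn : n ≤ T
        · filter_upwards [h'_drift₁ n hn] with ω hω hmem
          exact hω (hguard n hn ω hmem)
        · filter_upwards [h'_drift₂ n (Nat.lt_of_not_le hn)] with ω hω hmem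
          have h1 := (hmemD (n+1) ω).1 hmem n (Nat.lt_succ_self n)
          simp only [hGs_def, if_neg hn] at h1
          exact hω h1
      have step1 : (ℙ (D n ∩ X n ⁻¹' U)).toReal
          ≤ ∫ ω in D n \ D (n+1), B' n (X n ω) ∂ℙ := by
        have hsub2 : D n ∩ X n ⁻¹' U ⊆ D n \ D (n+1) := by
          rintro ω ⟨h1, h2⟩
          exact ⟨h1, hguard' n ω h2⟩
        have e1 : (ℙ (D n ∩ X n ⁻¹' U)).toReal = ∫ _ω in D n ∩ X n ⁻¹' U, (1:ℝ) ∂ℙ := by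
          simp [setIntegral_const, measureReal_def]
        rw [e1]
        calc ∫ _ω in D n ∩ X n ⁻¹' U, (1:ℝ) ∂ℙ
            ≤ ∫ ω in D n ∩ X n ⁻¹' U, B' n (X n ω) ∂ℙ :=
              setIntegral_mono_on (integrableOn_const (measure_ne_top ℙ _))
                (hintB' n).integrableOn ((hDm n).inter ((hmX n) hU))
                (fun ω hω => h'_unsafe n (X n ω) hω.2)
          _ ≤ ∫ ω in D n \ D (n+1), B' n (X n ω) ∂ℙ :=
              setIntegral_mono_set (hintB' n).integrableOn
                (Filter.Eventually.of_forall fun ω => h'_nonneg n (X n ω))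
                (HasSubset.Subset.eventuallyLE hsub2)
      have hsp := hsplit (fun ω => B' n (X n ω)) n (hintB' n)
      linarith
  have hp0 : 0 ≤ p := le_trans (h'_nonneg 0 x₀) h'_init
  have hpU : ℙ (D (T+1) ∩ {ω | ∀ n, X n ω ∉ U}ᶜ) ≤ ENNReal.ofReal p := by
    have hsub : D (T+1) ∩ {ω | ∀ n, X n ω ∉ U}ᶜ ⊆ ⋃ m, (D m ∩ X m ⁻¹' U) := by
      rintro ω ⟨hA, hS⟩
      simp only [Set.mem_compl_iff, Set.mem_setOf_eq, not_forall, not_not] at hS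
      have hex : ∃ n, X n ω ∈ U := hS
      refine Set.mem_iUnion.2 ⟨Nat.find hex, ?_, Nat.find_spec hex⟩
      rw [hmemD]
      intro m hm
      by_cases hmT : m ≤ T
      · exact (hmemD (T+1) ω).1 hA m (Nat.lt_succ_of_le hmT)
      · simp only [hGs_def, if_neg hmT]
        exact Nat.find_min hex hm
    refine le_trans (measure_mono hsub) (le_trans (measure_iUnion_le _) ?_)
    rw [ENNReal.tsum_eq_iSup_nat]
    refine iSup_le fun n => ?_
    have h1 := key2 n
    have h2 : 0 ≤ ∫ ω in D n, B' n (X n ω) ∂ℙ :=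
      setIntegral_nonneg (hDm n) fun ω _ => h'_nonneg n (X n ω)
    have h3 : (∑ m ∈ Finset.range n, ℙ (D m ∩ X m ⁻¹' U)).toReal ≤ p := by
      rw [ENNReal.toReal_sum (fun m _ => measure_ne_top ℙ _)]
      linarith
    exact (ENNReal.le_ofReal_iff_toReal_le
      (ENNReal.sum_ne_top.2 fun m _ => measure_ne_top ℙ _) hp0).2 h3
  rw [hA_eq, ProbabilityTheory.cond_apply (hDm (T+1))]
  set A := D (T+1) with hA_def
  set S := {ω : Ω | ∀ n, X n ω ∉ U} with hS_def
  have hAne : ℙ A ≠ 0 :=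
    ne_of_gt (lt_of_lt_of_le (ENNReal.ofReal_pos.2 hq) hqA)
  have hAtop : ℙ A ≠ ⊤ := measure_ne_top ℙ A
  have hsplitA : ℙ A ≤ ℙ (A ∩ S) + ENNReal.ofReal p := by
    have hc : A ⊆ (A ∩ S) ∪ (A ∩ Sᶜ) := by
      intro ω hω; by_cases h : ω ∈ S
      · exact Or.inl ⟨hω, h⟩
      · exact Or.inr ⟨hω, h⟩
    exact le_trans (measure_mono hc)
      (le_trans (measure_union_le _ _) (add_le_add le_rfl hpU))
  have hmul : ENNReal.ofReal (1 - p / q) * ℙ A ≤ ℙ (A ∩ S) := by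
    rcases le_or_gt (1 - p / q) 0 with h | h
    · rw [ENNReal.ofReal_eq_zero.2 h, zero_mul]; exact zero_le'
    · have ha_q : q ≤ (ℙ A).toReal := by
        have h4 := ENNReal.toReal_mono hAtop hqA
        rwa [ENNReal.toReal_ofReal hq.le] at h4
      have hAS : (ℙ A).toReal ≤ (ℙ (A ∩ S)).toReal + p := by
        have h4 := ENNReal.toReal_mono
          (by exact ENNReal.add_ne_top.2 ⟨measure_ne_top ℙ _, ENNReal.ofReal_ne_top⟩) hsplitA
        rwa [ENNReal.toReal_add (measure_ne_top ℙ _) ENNReal.ofReal_ne_top,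
          ENNReal.toReal_ofReal hp0] at h4
      have h5 : p ≤ p / q * (ℙ A).toReal := by
        have h6 : p / q * q ≤ p / q * (ℙ A).toReal :=
          mul_le_mul_of_nonneg_left ha_q (div_nonneg hp0 hq.le)
        rwa [div_mul_cancel₀ p hq.ne'] at h6
      rw [← ENNReal.ofReal_toReal hAtop, ← ENNReal.ofReal_mul h.le,
        ← ENNReal.ofReal_toReal (measure_ne_top ℙ (A ∩ S))]
      refine ENNReal.ofReal_le_ofReal ?_
      nlinarith
  calc ENNReal.ofReal (1 - p / q)
      = ENNReal.ofReal (1 - p / q) * ℙ A * (ℙ A)⁻¹ := by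
        rw [mul_assoc, ENNReal.mul_inv_cancel hAne hAtop, mul_one]
    _ ≤ ℙ (A ∩ S) * (ℙ A)⁻¹ := mul_le_mul_left hmul _
    _ = (ℙ A)⁻¹ * ℙ (A ∩ S) := mul_comm _ _
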